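/- Let A' ⊆ A be an inclusion of commutative Noetherian rings graded by the nonnegative integers, compatible with the gradings, such that A'₀ and A₀ are local rings, the maximal ideal of A'₀ maps into the maximal ideal of A₀, and A is finite as an A'-module. Let m̃' ⊆ A' (respectively m̃ ⊆ A) be the maximal ideal generated by the maximal ideal of the degree-zero part together with all homogeneous elements of positive degree. Then m̃ is the unique prime ideal of A lying over m̃'; consequently, for any finitely generated A-module N, the localization of N at m̃' as an A'-module coincides with its localization at m̃ as an A-module. -/

import Mathlib

/-- For a commutative ring `B` graded by the nonnegative integers whose degree-zero part
`B₀ = 𝒝 0` is a local ring, this is the ('irrelevant') maximal ideal of `B` generated by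
the maximal ideal of `B₀` together with all homogeneous elements of positive degree. -/
def gradedIrrelevantMaximalIdeal (B : Type) [CommRing B] (𝒝 : ℕ → AddSubgroup B)
    [GradedRing 𝒝] [IsLocalRing (𝒝 0)] : Ideal B :=
  Ideal.span
    ((Subtype.val '' ((IsLocalRing.maximalIdeal (𝒝 0) : Ideal (𝒝 0)) : Set (𝒝 0))) ∪
      ⋃ k ∈ {k : ℕ | 0 < k}, (𝒝 k : Set B))

set_option linter.unusedSectionVars false

section helpers
variable (B : Type) [CommRing B] (𝒝 : ℕ → AddSubgroup B) [GradedRing 𝒝] [IsLocalRing (𝒝 0)]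

lemma gIMI_eq_comap :
    gradedIrrelevantMaximalIdeal B 𝒝 =
      (IsLocalRing.maximalIdeal (𝒝 0)).comap (GradedRing.projZeroRingHom' 𝒝) := by
  apply le_antisymm
  · rw [gradedIrrelevantMaximalIdeal, Ideal.span_le]
    rintro x (⟨y, hy, rfl⟩ | hx)
    · simpa [Ideal.mem_comap] using hy
    · simp only [Set.mem_iUnion, Set.mem_setOf_eq] at hx
      obtain ⟨k, hk, hxk⟩ := hx
      have : GradedRing.projZeroRingHom' 𝒝 x = 0 := by
        ext
        simp only [GradedRing.coe_projZeroRingHom'_apply, GradedRing.projZeroRingHom_apply]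
        rw [DirectSum.decompose_of_mem_ne 𝒝 hxk hk.ne']
        rfl
      simp [Ideal.mem_comap, this]
  · intro x hx
    simp only [Ideal.mem_comap] at hx
    classical
    rw [← DirectSum.sum_support_decompose 𝒝 x]
    apply Ideal.sum_mem
    intro i _
    by_cases hi : i = 0
    · subst hi
      apply Ideal.subset_span
      left
      exact ⟨DirectSum.decompose 𝒝 x 0, hx, rfl⟩
    · apply Ideal.subset_span
      right
      exact Set.mem_biUnion (Nat.pos_of_ne_zero hi) (SetLike.coe_mem _)

lemma gIMI_isMaximal : (gradedIrrelevantMaximalIdeal B 𝒝).IsMaximal := by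
  rw [gIMI_eq_comap]
  exact Ideal.comap_isMaximal_of_surjective _ (GradedRing.projZeroRingHom'_surjective 𝒝)

lemma mem_gIMI_iff (x : B) :
    x ∈ gradedIrrelevantMaximalIdeal B 𝒝 ↔
      DirectSum.decompose 𝒝 x 0 ∈ IsLocalRing.maximalIdeal (𝒝 0) := by
  rw [gIMI_eq_comap, Ideal.mem_comap]
  rfl

end helpers

section main
variable (A' A : Type) [CommRing A'] [CommRing A]
    [Algebra A' A]
    (𝒜' : ℕ → AddSubgroup A') [GradedRing 𝒜'] [IsLocalRing (𝒜' 0)]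
    (𝒜 : ℕ → AddSubgroup A) [GradedRing 𝒜] [IsLocalRing (𝒜 0)]

lemma decompose_algebraMap (hcompat : ∀ (k : ℕ) (a : A'), a ∈ 𝒜' k → algebraMap A' A a ∈ 𝒜 k)
    (a : A') (k : ℕ) :
    (DirectSum.decompose 𝒜 (algebraMap A' A a) k : A) =
      algebraMap A' A (DirectSum.decompose 𝒜' a k : A') := by
  induction a using DirectSum.Decomposition.inductionOn 𝒜' with
  | zero => simp
  | @homogeneous j x =>
    by_cases h : k = j
    · subst h
      rw [DirectSum.decompose_of_mem_same 𝒜 (hcompat k x x.2),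
        DirectSum.decompose_coe, DirectSum.of_eq_same]
    · rw [DirectSum.decompose_of_mem_ne 𝒜 (hcompat j x x.2) (Ne.symm h),
        DirectSum.decompose_coe, DirectSum.of_eq_of_ne _ _ _ h]
      simp
  | add x y hx hy =>
    rw [map_add, DirectSum.decompose_add, DirectSum.decompose_add, DirectSum.add_apply,
      DirectSum.add_apply, AddMemClass.coe_add, AddMemClass.coe_add, hx, hy, map_add]

/-- the induced ring hom on degree-zero parts -/
def phiZero : (𝒜' 0) →+* (𝒜 0) :=
  (GradedRing.projZeroRingHom' 𝒜).comp
    ((algebraMap A' A).comp (SetLike.GradeZero.subring 𝒜').subtype)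

lemma phiZero_coe (hcompat : ∀ (k : ℕ) (a : A'), a ∈ 𝒜' k → algebraMap A' A a ∈ 𝒜 k)
    (x : (𝒜' 0)) :
    (phiZero A' A 𝒜' 𝒜 x : A) = algebraMap A' A (x : A') := by
  simp only [phiZero, RingHom.coe_comp, Function.comp_apply,
    GradedRing.coe_projZeroRingHom'_apply, GradedRing.projZeroRingHom_apply]
  exact DirectSum.decompose_of_mem_same 𝒜 (hcompat 0 x x.2)


lemma comap_gIMI (hcompat : ∀ (k : ℕ) (a : A'), a ∈ 𝒜' k → algebraMap A' A a ∈ 𝒜 k)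
    (hlocal : ∀ a : (𝒜' 0), a ∈ IsLocalRing.maximalIdeal (𝒜' 0) →
      (⟨algebraMap A' A a, hcompat 0 a a.2⟩ : (𝒜 0)) ∈ IsLocalRing.maximalIdeal (𝒜 0)) :
    Ideal.comap (algebraMap A' A) (gradedIrrelevantMaximalIdeal A 𝒜) =
      gradedIrrelevantMaximalIdeal A' 𝒜' := by
  ext a
  rw [Ideal.mem_comap, mem_gIMI_iff, mem_gIMI_iff]
  have key0 : DirectSum.decompose 𝒜 (algebraMap A' A a) 0 =
      phiZero A' A 𝒜' 𝒜 (DirectSum.decompose 𝒜' a 0) := by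
    ext
    rw [phiZero_coe A' A 𝒜' 𝒜 hcompat, decompose_algebraMap A' A 𝒜' 𝒜 hcompat]
  rw [key0]
  constructor
  · intro h
    by_contra hmem
    rw [IsLocalRing.mem_maximalIdeal, mem_nonunits_iff, not_not] at hmem
    exact mem_nonunits_iff.mp ((IsLocalRing.mem_maximalIdeal _).mp h)
      (hmem.map (phiZero A' A 𝒜' 𝒜))
  · intro h
    have := hlocal _ h
    convert this using 1
    ext
    rw [phiZero_coe A' A 𝒜' 𝒜 hcompat]

lemma finite_degZero [Module.Finite A' A]
    (hcompat : ∀ (k : ℕ) (a : A'), a ∈ 𝒜' k → algebraMap A' A a ∈ 𝒜 k) :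
    letI : Algebra (𝒜' 0) (𝒜 0) := (phiZero A' A 𝒜' 𝒜).toAlgebra
    Module.Finite (𝒜' 0) (𝒜 0) := by
  classical
  letI : Algebra (𝒜' 0) (𝒜 0) := (phiZero A' A 𝒜' 𝒜).toAlgebra
  obtain ⟨S, hS⟩ := Module.Finite.fg_top (R := A') (M := A)
  refine ⟨⟨S.image (GradedRing.projZeroRingHom' 𝒜), le_antisymm le_top fun y _ => ?_⟩⟩
  have hy : (y : A) ∈ Submodule.span A' (S : Set A) := by rw [hS]; trivial
  obtain ⟨f, -, hf⟩ := Submodule.mem_span_finset.mp hy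
  have : y = ∑ g ∈ S, (GradedRing.projZeroRingHom' 𝒜' (f g)) •
      (GradedRing.projZeroRingHom' 𝒜 g) := by
    ext
    push_cast [AddSubmonoidClass.coe_finset_sum]
    have : ∀ g : A, ((GradedRing.projZeroRingHom' 𝒜' (f g)) •
        (GradedRing.projZeroRingHom' 𝒜 g) : (𝒜 0)) =
        (GradedRing.projZeroRingHom' 𝒜 (f g • g) : (𝒜 0)) := by
      intro g
      show phiZero A' A 𝒜' 𝒜 _ * _ = _
      ext
      push_cast
      rw [phiZero_coe A' A 𝒜' 𝒜 hcompat]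
      simp only [GradedRing.coe_projZeroRingHom'_apply]
      rw [Algebra.smul_def, map_mul]
      congr 1
      rw [GradedRing.projZeroRingHom_apply, GradedRing.projZeroRingHom_apply]
      exact (decompose_algebraMap A' A 𝒜' 𝒜 hcompat _ 0).symm
    calc (y : A) = (GradedRing.projZeroRingHom' 𝒜 (y : A) : A) := by
          simp only [GradedRing.coe_projZeroRingHom'_apply, GradedRing.projZeroRingHom_apply]
          rw [DirectSum.decompose_of_mem_same 𝒜 y.2]
      _ = (GradedRing.projZeroRingHom' 𝒜 (∑ g ∈ S, f g • g) : A) := by rw [hf]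
      _ = ∑ g ∈ S, ((GradedRing.projZeroRingHom' 𝒜 (f g • g) : (𝒜 0)) : A) := by
          rw [map_sum, AddSubmonoidClass.coe_finset_sum]
      _ = ∑ g ∈ S, (((GradedRing.projZeroRingHom' 𝒜' (f g)) •
            (GradedRing.projZeroRingHom' 𝒜 g) : (𝒜 0)) : A) := by
          simp only [this]
  rw [this]
  exact Submodule.sum_mem _ fun g hg => Submodule.smul_mem _ _
    (Submodule.subset_span (Finset.mem_image_of_mem _ hg))


lemma unique_prime_over [Module.Finite A' A]
    (hcompat : ∀ (k : ℕ) (a : A'), a ∈ 𝒜' k → algebraMap A' A a ∈ 𝒜 k)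
    (p : Ideal A) (hp : p.IsPrime)
    (hcomap : p.comap (algebraMap A' A) = gradedIrrelevantMaximalIdeal A' 𝒜') :
    p = gradedIrrelevantMaximalIdeal A 𝒜 := by
  classical
  haveI := hp
  refine ((gIMI_isMaximal A 𝒜).eq_of_le hp.ne_top ?_).symm
  rw [gradedIrrelevantMaximalIdeal, Ideal.span_le]
  rintro x (⟨y, hy, rfl⟩ | hx)
  · -- degree-zero generators
    letI : Algebra (𝒜' 0) (𝒜 0) := (phiZero A' A 𝒜' 𝒜).toAlgebra
    haveI : Module.Finite (𝒜' 0) (𝒜 0) := finite_degZero A' A 𝒜' 𝒜 hcompat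
    haveI : Algebra.IsIntegral (𝒜' 0) (𝒜 0) := Algebra.IsIntegral.of_finite (𝒜' 0) (𝒜 0)
    set ι₀ : (𝒜 0) →+* A := (SetLike.GradeZero.subring 𝒜).subtype with hι₀
    set q : Ideal (𝒜 0) := p.comap ι₀ with hqdef
    haveI hqp : q.IsPrime := Ideal.IsPrime.comap ι₀
    have hq : q.comap (algebraMap (𝒜' 0) (𝒜 0)) = IsLocalRing.maximalIdeal (𝒜' 0) := by
      ext z
      rw [Ideal.mem_comap, Ideal.mem_comap, RingHom.algebraMap_toAlgebra]
      have hcoe : (ι₀ (phiZero A' A 𝒜' 𝒜 z) : A) = algebraMap A' A (z : A') :=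
        phiZero_coe A' A 𝒜' 𝒜 hcompat z
      rw [show (ι₀ (phiZero A' A 𝒜' 𝒜 z) : A) = ((phiZero A' A 𝒜' 𝒜 z : (𝒜 0)) : A) from rfl]
        at hcoe
      constructor
      · intro hz
        have : (z : A') ∈ p.comap (algebraMap A' A) := by
          rw [Ideal.mem_comap, ← hcoe]; exact hz
        rw [hcomap, mem_gIMI_iff] at this
        rwa [DirectSum.decompose_coe, DirectSum.of_eq_same] at this
      · intro hz
        have : (z : A') ∈ gradedIrrelevantMaximalIdeal A' 𝒜' := by
          rw [mem_gIMI_iff, DirectSum.decompose_coe, DirectSum.of_eq_same]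
          exact hz
        rw [← hcomap, Ideal.mem_comap] at this
        show ((phiZero A' A 𝒜' 𝒜 z : (𝒜 0)) : A) ∈ p
        rw [hcoe]; exact this
    haveI hqm : q.IsMaximal := by
      refine Ideal.isMaximal_of_isIntegral_of_isMaximal_comap (R := (𝒜' 0)) q ?_
      rw [hq]; exact IsLocalRing.maximalIdeal.isMaximal _
    have : q = IsLocalRing.maximalIdeal (𝒜 0) := IsLocalRing.eq_maximalIdeal hqm
    rw [← this] at hy
    exact hy
  · -- positive-degree generators
    simp only [Set.mem_iUnion, Set.mem_setOf_eq] at hx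
    obtain ⟨k, hk, hxk⟩ := hx
    obtain ⟨S, hS⟩ := Module.Finite.fg_top (R := A') (M := A)
    set D := S.sup (fun g => (DirectSum.decompose 𝒜 g).support.sup id) with hD
    set N := D + 1 with hN
    have hNk : D < N * k := lt_of_lt_of_le (Nat.lt_succ_self D) (Nat.le_mul_of_pos_right _ hk)
    have hpow : x ^ N ∈ 𝒜 (N * k) := by
      simpa [smul_eq_mul] using SetLike.pow_mem_graded N hxk
    have hmem : x ^ N ∈ Submodule.span A' (S : Set A) := by rw [hS]; trivial
    obtain ⟨f, -, hf⟩ := Submodule.mem_span_finset.mp hmem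
    refine hp.mem_of_pow_mem N ?_
    have hx1 : x ^ N = (DirectSum.decompose 𝒜 (x ^ N) (N * k) : A) :=
      (DirectSum.decompose_of_mem_same 𝒜 hpow).symm
    rw [hx1, ← hf, DirectSum.decompose_sum, DFinsupp.finset_sum_apply,
      AddSubmonoidClass.coe_finset_sum]
    refine Ideal.sum_mem _ fun g hg => ?_
    rw [Algebra.smul_def, DirectSum.decompose_mul, DirectSum.coe_mul_apply]
    refine Ideal.sum_mem _ fun ij hij => ?_
    rw [Finset.mem_filter, Finset.mem_product] at hij
    obtain ⟨⟨hi_supp, hj_supp⟩, hsum⟩ := hij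
    have hjD : ij.2 ≤ D := le_trans (Finset.le_sup (f := id) hj_supp)
      (Finset.le_sup (f := fun g => (DirectSum.decompose 𝒜 g).support.sup id) hg)
    have hi0 : ij.1 ≠ 0 := by rintro h0; rw [h0, zero_add] at hsum; omega
    apply Ideal.mul_mem_right
    rw [decompose_algebraMap A' A 𝒜' 𝒜 hcompat]
    have hmem' : (DirectSum.decompose 𝒜' (f g) ij.1 : A') ∈
        gradedIrrelevantMaximalIdeal A' 𝒜' := by
      rw [mem_gIMI_iff]
      have h0 : (DirectSum.decompose 𝒜'
          ((DirectSum.decompose 𝒜' (f g) ij.1 : A')) 0 : A') = 0 :=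
        DirectSum.decompose_of_mem_ne 𝒜' (SetLike.coe_mem _) hi0
      rw [show DirectSum.decompose 𝒜'
          ((DirectSum.decompose 𝒜' (f g) ij.1 : A')) 0 = 0 from Subtype.ext h0]
      exact zero_mem _
    rw [← hcomap, Ideal.mem_comap] at hmem'
    exact hmem'


lemma key_sat [Module.Finite A' A]
    (hcompat : ∀ (k : ℕ) (a : A'), a ∈ 𝒜' k → algebraMap A' A a ∈ 𝒜 k)
    (s : A) (hs : s ∉ gradedIrrelevantMaximalIdeal A 𝒜) :
    ∃ (s' : A') (t : A), s' ∉ gradedIrrelevantMaximalIdeal A' 𝒜' ∧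
      algebraMap A' A s' = s * t := by
  haveI : (gradedIrrelevantMaximalIdeal A' 𝒜').IsPrime := (gIMI_isMaximal A' 𝒜').isPrime
  by_contra hcon
  push_neg at hcon
  set Smon : Submonoid A :=
    Submonoid.map (algebraMap A' A) (gradedIrrelevantMaximalIdeal A' 𝒜').primeCompl with hSmon
  have hdisj : Disjoint ((Ideal.span {s} : Ideal A) : Set A) (Smon : Set A) := by
    rw [Set.disjoint_left]
    rintro a ha ⟨s', hs', rfl⟩
    obtain ⟨t, ht⟩ := Ideal.mem_span_singleton.mp ha
    exact hcon s' t hs' ht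
  obtain ⟨p, hpprime, hsp, hdisj2⟩ := Ideal.exists_le_prime_disjoint _ Smon hdisj
  haveI := hpprime
  have hcom : p.comap (algebraMap A' A) ≤ gradedIrrelevantMaximalIdeal A' 𝒜' := by
    intro s' hs'
    by_contra h
    exact Set.disjoint_left.mp hdisj2 (Ideal.mem_comap.mp hs') ⟨s', h, rfl⟩
  obtain ⟨Q, hQle, hQprime, hQcomap⟩ :=
    Ideal.exists_ideal_over_prime_of_isIntegral_of_isPrime
      (gradedIrrelevantMaximalIdeal A' 𝒜') p hcom
  have hQm := unique_prime_over A' A 𝒜' 𝒜 hcompat Q hQprime hQcomap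
  exact hs (hQm ▸ hQle (hsp (Ideal.subset_span rfl)))

end main

/-- Let `A' ⊆ A` be an inclusion of commutative Noetherian rings graded by the nonnegative
integers, compatible with the gradings, such that `A'₀` and `A₀` are local rings, the
maximal ideal of `A'₀` maps into the maximal ideal of `A₀`, and `A` is finite as an
`A'`-module.  Let `m̃' ⊆ A'` (respectively `m̃ ⊆ A`) be the maximal ideal generated by the
maximal ideal of the degree-zero part together with all homogeneous elements of positive
degree.  Then `m̃` is the unique prime ideal of `A` lying over `m̃'`; consequently, for any
finitely generated `A`-module `N`, the localization of `N` at `m̃'` as an `A'`-module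
coincides with its localization at `m̃` as an `A`-module (expressed below by saying that
the canonical map `N → N_{m̃}` is a localization of `N` at the multiplicative set
`A' ∖ m̃'`, acting on `N` through `A' → A`). -/
theorem unique_prime_over_irrelevant_maximal_ideal
    (A' A : Type) [CommRing A'] [CommRing A] [IsNoetherianRing A'] [IsNoetherianRing A]
    [Algebra A' A] (hinj : Function.Injective (algebraMap A' A))
    (𝒜' : ℕ → AddSubgroup A') [GradedRing 𝒜'] [IsLocalRing (𝒜' 0)]
    (𝒜 : ℕ → AddSubgroup A) [GradedRing 𝒜] [IsLocalRing (𝒜 0)]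
    -- the inclusion `A' ⊆ A` is compatible with the gradings
    (hcompat : ∀ (k : ℕ) (a : A'), a ∈ 𝒜' k → algebraMap A' A a ∈ 𝒜 k)
    -- the maximal ideal of `A'₀` maps into the maximal ideal of `A₀`
    (hlocal : ∀ a : (𝒜' 0), a ∈ IsLocalRing.maximalIdeal (𝒜' 0) →
      (⟨algebraMap A' A a, hcompat 0 a a.2⟩ : (𝒜 0)) ∈ IsLocalRing.maximalIdeal (𝒜 0))
    -- `A` is a finite `A'`-module
    [Module.Finite A' A]
    (m' : Ideal A') (hm' : m' = gradedIrrelevantMaximalIdeal A' 𝒜')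
    (m : Ideal A) (hm : m = gradedIrrelevantMaximalIdeal A 𝒜) :
    ∃ hp : m.IsPrime,
      -- `m̃` lies over `m̃'`
      Ideal.comap (algebraMap A' A) m = m' ∧
      -- and it is the unique prime of `A` doing so
      (∀ p : Ideal A, p.IsPrime → Ideal.comap (algebraMap A' A) p = m' → p = m) ∧
      -- consequently, for any finitely generated `A`-module `N`, the canonical map
      -- `N → N_{m̃}` is also a localization of `N` at the multiplicative set `A' ∖ m̃'`:
      ∀ (N : Type) [AddCommGroup N] [Module A N] [Module.Finite A N],
        (∀ s : A', s ∉ m' → Function.Bijective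
          (fun x : LocalizedModule (@Ideal.primeCompl A _ m hp) N =>
            algebraMap A' A s • x)) ∧
        (∀ x : LocalizedModule (@Ideal.primeCompl A _ m hp) N,
          ∃ (v : N) (s : A'), s ∉ m' ∧
            algebraMap A' A s • x =
              LocalizedModule.mkLinearMap (@Ideal.primeCompl A _ m hp) N v) ∧
        (∀ v w : N,
          LocalizedModule.mkLinearMap (@Ideal.primeCompl A _ m hp) N v =
            LocalizedModule.mkLinearMap (@Ideal.primeCompl A _ m hp) N w →
          ∃ s : A', s ∉ m' ∧ algebraMap A' A s • v = algebraMap A' A s • w) := by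
  subst hm hm'
  haveI hp : (gradedIrrelevantMaximalIdeal A 𝒜).IsPrime := (gIMI_isMaximal A 𝒜).isPrime
  refine ⟨hp, comap_gIMI A' A 𝒜' 𝒜 hcompat hlocal,
    fun p hpp hcomap => unique_prime_over A' A 𝒜' 𝒜 hcompat p hpp hcomap, ?_⟩
  intro N _ _ _
  have hsc : ∀ s : A', s ∉ gradedIrrelevantMaximalIdeal A' 𝒜' →
      algebraMap A' A s ∈ (gradedIrrelevantMaximalIdeal A 𝒜).primeCompl := by
    intro s hsm hmem
    exact hsm (by rw [← comap_gIMI A' A 𝒜' 𝒜 hcompat hlocal]; exact hmem)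
  refine ⟨?_, ?_, ?_⟩
  · intro s hsm
    have hu := IsLocalizedModule.map_units
      (LocalizedModule.mkLinearMap (gradedIrrelevantMaximalIdeal A 𝒜).primeCompl N)
      ⟨_, hsc s hsm⟩
    rw [Module.End.isUnit_iff] at hu
    have heq : (fun x : LocalizedModule (gradedIrrelevantMaximalIdeal A 𝒜).primeCompl N =>
        algebraMap A' A s • x) =
        ⇑(algebraMap A (Module.End A
          (LocalizedModule (gradedIrrelevantMaximalIdeal A 𝒜).primeCompl N))
          (algebraMap A' A s)) := by
      ext x
      rw [Module.algebraMap_end_apply]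
    rw [heq]
    exact hu
  · intro x
    refine LocalizedModule.induction_on (fun v t => ?_) x
    obtain ⟨s', u, hs', heq⟩ := key_sat A' A 𝒜' 𝒜 hcompat (t : A) t.2
    refine ⟨u • v, s', hs', ?_⟩
    rw [LocalizedModule.mkLinearMap_apply, LocalizedModule.smul'_mk,
      show (algebraMap A' A s') • v = t • (u • v) by
        rw [Submonoid.smul_def, heq, mul_smul],
      LocalizedModule.mk_cancel]
  · intro v w hvw
    rw [LocalizedModule.mkLinearMap_apply, LocalizedModule.mkLinearMap_apply,
      LocalizedModule.mk_eq] at hvw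
    obtain ⟨u, hu⟩ := hvw
    simp only [one_smul] at hu
    have hu' : (u : A) • v = (u : A) • w := by simpa [Submonoid.smul_def] using hu
    obtain ⟨s', t, hs', heq⟩ := key_sat A' A 𝒜' 𝒜 hcompat (u : A) u.2
    refine ⟨s', hs', ?_⟩
    rw [heq, mul_comm, mul_smul, mul_smul, hu']
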